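/- For every n divisible by 3, there exists a graph on n vertices with exactly 3^{n/3} maximal cliques. -/

import Mathlib

/-- for every `n` divisible by 3, there is a graph on `n` vertices with
exactly `3^{n/3}` maximal cliques. -/
theorem moon_moser_tight (n : ℕ) (hn : 3 ∣ n) :
    ∃ (G : SimpleGraph (Fin n)),
      ({s : Finset (Fin n) | G.IsClique (s : Set (Fin n)) ∧
        ∀ t : Finset (Fin n), G.IsClique (t : Set (Fin n)) → s ⊆ t → s = t}).ncard
        = 3 ^ (n / 3) := by
  set m := n / 3 with hm
  have hnm : m * 3 = n := Nat.div_mul_cancel hn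
  let e : Fin n ≃ Fin m × Fin 3 := ((finProdFinEquiv.trans (finCongr hnm))).symm
  let G : SimpleGraph (Fin n) :=
    { Adj := fun a b => (e a).1 ≠ (e b).1
      symm := ⟨fun a b h => h.symm⟩
      loopless := ⟨fun a h => h rfl⟩ }
  refine ⟨G, ?_⟩
  have hadj : ∀ a b, G.Adj a b ↔ (e a).1 ≠ (e b).1 := fun a b => Iff.rfl
  let F : (Fin m → Fin 3) → Finset (Fin n) :=
    fun f => Finset.univ.image (fun i => e.symm (i, f i))
  have hmemF : ∀ (f : Fin m → Fin 3) (a : Fin n),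
      a ∈ F f ↔ ∃ i, e.symm (i, f i) = a := by
    intro f a
    simp [F]
  have hFinj : Function.Injective F := by
    intro f g hfg
    funext i
    have : e.symm (i, f i) ∈ F g := by
      rw [← hfg, hmemF]; exact ⟨i, rfl⟩
    rw [hmemF] at this
    obtain ⟨j, hj⟩ := this
    obtain ⟨h1, h2⟩ := Prod.ext_iff.1 (e.symm.injective hj)
    subst h1
    exact h2.symm
  have hset : {s : Finset (Fin n) | G.IsClique (s : Set (Fin n)) ∧
        ∀ t : Finset (Fin n), G.IsClique (t : Set (Fin n)) → s ⊆ t → s = t}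
      = Set.range F := by
    ext s
    simp only [Set.mem_setOf_eq, Set.mem_range]
    constructor
    · rintro ⟨hcl, hmax⟩
      -- every part index is hit
      have hhit : ∀ i : Fin m, ∃ a ∈ s, (e a).1 = i := by
        intro i
        by_contra hcon
        push_neg at hcon
        set b := e.symm (i, 0) with hb
        have hbfst : (e b).1 = i := by simp [hb]
        have hbs : b ∉ s := fun h => hcon b h hbfst
        have hclique : G.IsClique ((insert b s : Finset (Fin n)) : Set (Fin n)) := by
          intro x hx y hy hxy
          simp only [Finset.coe_insert, Set.mem_insert_iff, Finset.mem_coe] at hx hy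
          rcases hx with hx | hx
          · rcases hy with hy | hy
            · exact absurd (hx.trans hy.symm) hxy
            · subst hx
              rw [hadj, hbfst]
              exact fun h => hcon y hy h.symm
          · rcases hy with hy | hy
            · subst hy
              rw [hadj, hbfst]
              exact fun h => hcon x hx h
            · exact hcl hx hy hxy
        have := hmax (insert b s) hclique (Finset.subset_insert _ _)
        exact hbs (this ▸ Finset.mem_insert_self b s)
      choose a ha hafst using hhit
      refine ⟨fun i => (e (a i)).2, ?_⟩
      -- uniqueness of elements with a given first coordinate
      have huniq : ∀ x ∈ s, ∀ y ∈ s, (e x).1 = (e y).1 → x = y := by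
        intro x hx y hy hxy
        by_contra hne
        exact (hcl hx hy hne) hxy
      ext x
      rw [hmemF]
      constructor
      · rintro ⟨i, rfl⟩
        have : e.symm (i, (e (a i)).2) = a i := by
          rw [show (i, (e (a i)).2) = e (a i) from (Prod.ext (hafst i).symm rfl), e.symm_apply_apply]
        rw [this]; exact ha i
      · intro hx
        refine ⟨(e x).1, ?_⟩
        have hax : a (e x).1 = x := huniq _ (ha _) _ hx (hafst _)
        rw [show ((e x).1, (e (a (e x).1)).2) = e x by
          rw [hax], e.symm_apply_apply]
    · rintro ⟨f, rfl⟩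
      constructor
      · intro x hx y hy hxy
        rw [Finset.mem_coe, hmemF] at hx hy
        obtain ⟨i, rfl⟩ := hx
        obtain ⟨j, rfl⟩ := hy
        rw [hadj]
        simp only [Equiv.apply_symm_apply]
        intro hij
        exact hxy (by rw [show i = j from hij])
      · intro t ht hst
        apply Finset.Subset.antisymm hst
        intro b hb
        rw [hmemF]
        refine ⟨(e b).1, ?_⟩
        set a := e.symm ((e b).1, f (e b).1) with hadef
        have has : a ∈ F f := by rw [hmemF]; exact ⟨(e b).1, rfl⟩
        by_contra hne
        have := ht (hst has) hb hne
        rw [hadj] at this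
        apply this
        simp [hadef]
  rw [hset]
  have : (Set.range F).ncard = Nat.card (Fin m → Fin 3) := by
    rw [Set.ncard_eq_toFinset_card']
    rw [Set.toFinset_range]
    rw [Finset.card_image_of_injective _ hFinj]
    simp [Nat.card_eq_fintype_card]
  rw [this]
  simp [Nat.card_eq_fintype_card]
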